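/- In a minimal dynamical system on a compact metric space, a point x can be proximal to a translate t·x only if t·x = x. Equivalently, if inf_{s∈G} d(s·x, s·t·x) = 0 in a minimal system with abelian acting group, then t·x = x. -/

import Mathlib

/-- In a minimal system with abelian acting group on a compact metric
space, a point x can be proximal to a translate t·x only if t·x = x. -/
theorem proximal_to_translate_implies_fixed
    {X G : Type} [MetricSpace X] [CompactSpace X]
    [AddCommGroup G] [TopologicalSpace G] [IsTopologicalAddGroup G] [LocallyCompactSpace G]
    (φ : G → X → X)
    (hφcont : Continuous fun p : G × X => φ p.1 p.2)
    (hφzero : ∀ x, φ 0 x = x)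
    (hφadd : ∀ s t x, φ (s + t) x = φ s (φ t x))
    (hmin : ∀ x : X, Dense (Set.range fun t => φ t x))
    (x : X) (t : G)
    (hprox : ∀ ε > (0:ℝ), ∃ s : G, dist (φ s x) (φ s (φ t x)) < ε) :
    φ t x = x := by
  have hφt : Continuous (φ t) :=
    hφcont.comp (continuous_const.prodMk continuous_id)
  set g : X → ℝ := fun y => dist y (φ t y) with hg
  have hgcont : Continuous g := continuous_id.dist hφt
  -- g is arbitrarily small on the orbit of x
  have hsmall : ∀ ε > (0:ℝ), ∃ s : G, g (φ s x) < ε := by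
    intro ε hε
    obtain ⟨s, hs⟩ := hprox ε hε
    refine ⟨s, ?_⟩
    have : φ t (φ s x) = φ s (φ t x) := by
      rw [← hφadd, ← hφadd, add_comm]
    simpa [hg, this] using hs
  -- a minimizer of g on the compact space X
  obtain ⟨y, hy⟩ : ∃ y : X, ∀ z : X, g y ≤ g z := by
    obtain ⟨s0, -⟩ := hsmall 1 one_pos
    obtain ⟨y, -, hy⟩ := isCompact_univ.exists_isMinOn ⟨φ s0 x, Set.mem_univ _⟩
      (hgcont.continuousOn)
    exact ⟨y, fun z => hy (Set.mem_univ z)⟩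
  have hy0 : g y = 0 := by
    have hle : g y ≤ 0 := by
      by_contra h
      push_neg at h
      obtain ⟨s, hs⟩ := hsmall (g y) h
      exact absurd (hy (φ s x)) (not_le.mpr hs)
    exact le_antisymm hle dist_nonneg
  -- the zero set of g is closed, invariant and contains y, hence is everything
  set A : Set X := {z | g z = 0} with hA
  have hclosed : IsClosed A := isClosed_eq hgcont continuous_const
  have hinv : Set.range (fun s => φ s y) ⊆ A := by
    rintro _ ⟨s, rfl⟩
    have hyfix : φ t y = y := by
      have := hy0
      simp only [hg] at this
      exact (dist_eq_zero.mp this).symm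
    have : φ t (φ s y) = φ s y := by
      rw [← hφadd, add_comm, hφadd, hyfix]
    simp [hA, hg, this]
  have hall : A = Set.univ := by
    have := (hmin y).mono hinv
    simpa [hclosed.closure_eq] using this.closure_eq
  have hx : g x = 0 := by
    have : x ∈ A := hall ▸ Set.mem_univ x
    exact this
  simpa [hg, eq_comm] using dist_eq_zero.mp hx
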